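/- The integral from 0 to 1 of x^2/sqrt(1-x^4) dx equals Γ(3/4)^2 / sqrt(2π). -/

import Mathlib

open Real MeasureTheory Set intervalIntegral

lemma beta_complex :
    Complex.betaIntegral (3/4) (1/2) =
      ((∫ x in (0:ℝ)..1, x ^ (-(1/4):ℝ) * (1-x) ^ (-(1/2):ℝ) : ℝ) : ℂ) := by
  rw [Complex.betaIntegral, ← intervalIntegral.integral_ofReal]
  refine intervalIntegral.integral_congr fun x hx => ?_
  rw [uIcc_of_le (by norm_num)] at hx
  rw [show (3/4-1:ℂ) = ((-(1/4):ℝ):ℂ) by norm_num,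
    show (1/2-1:ℂ) = ((-(1/2):ℝ):ℂ) by norm_num,
    show ((1:ℂ) - x) = ((1-x:ℝ):ℂ) by push_cast; ring,
    ← Complex.ofReal_cpow hx.1, ← Complex.ofReal_cpow (by linarith [hx.2])]
  push_cast
  ring

lemma beta_real :
    (∫ x in (0:ℝ)..1, x ^ (-(1/4):ℝ) * (1-x) ^ (-(1/2):ℝ)) =
      Real.Gamma (3/4) * Real.Gamma (1/2) / Real.Gamma (5/4) := by
  have h := Complex.Gamma_mul_Gamma_eq_betaIntegral (s := 3/4) (t := 1/2)
    (by norm_num) (by norm_num)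
  rw [beta_complex, show (3/4 + 1/2 : ℂ) = ((5/4:ℝ):ℂ) by norm_num,
    show (3/4 : ℂ) = ((3/4:ℝ):ℂ) by norm_num,
    show (1/2 : ℂ) = ((1/2:ℝ):ℂ) by norm_num,
    Complex.Gamma_ofReal, Complex.Gamma_ofReal, Complex.Gamma_ofReal] at h
  have h54 : Real.Gamma (5/4) ≠ 0 := Real.Gamma_pos_of_pos (by norm_num) |>.ne'
  rw [eq_div_iff h54, mul_comm]
  exact_mod_cast h.symm

lemma img_pow4 : (fun x : ℝ => x ^ 4) '' Ioo 0 1 = Ioo (0:ℝ) 1 := by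
  ext u
  simp only [mem_image, mem_Ioo]
  constructor
  · rintro ⟨x, ⟨hx0, hx1⟩, rfl⟩
    exact ⟨pow_pos hx0 4, pow_lt_one₀ hx0.le hx1 (by norm_num)⟩
  · rintro ⟨hu0, hu1⟩
    refine ⟨u ^ ((1:ℝ)/4), ⟨Real.rpow_pos_of_pos hu0 _,
      Real.rpow_lt_one hu0.le hu1 (by norm_num)⟩, ?_⟩
    rw [← Real.rpow_natCast (u ^ ((1:ℝ)/4)) 4, ← Real.rpow_mul hu0.le]
    norm_num

lemma subst_pow4 :
    (∫ x in (0:ℝ)..1, x^2 / Real.sqrt (1 - x^4)) =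
      (1/4) * ∫ u in (0:ℝ)..1, u ^ (-(1/4):ℝ) * (1-u) ^ (-(1/2):ℝ) := by
  have hinj : InjOn (fun x : ℝ => x ^ 4) (Ioo 0 1) :=
    (pow_left_strictMonoOn₀ (M₀ := ℝ) (n := 4) (by norm_num)).injOn.mono
      (fun a ha => ha.1.le)
  have key : (∫ u in Ioo (0:ℝ) 1, u ^ (-(1/4):ℝ) * (1-u) ^ (-(1/2):ℝ))
      = ∫ x in Ioo (0:ℝ) 1,
          |(4:ℝ) * x^3| • ((x^4) ^ (-(1/4):ℝ) * (1-x^4) ^ (-(1/2):ℝ)) := by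
    conv_lhs => rw [← img_pow4]
    exact integral_image_eq_integral_abs_deriv_smul measurableSet_Ioo
      (fun x _ => by simpa using (hasDerivAt_pow 4 x).hasDerivWithinAt) hinj _
  rw [intervalIntegral.integral_of_le zero_le_one,
    intervalIntegral.integral_of_le zero_le_one,
    MeasureTheory.integral_Ioc_eq_integral_Ioo,
    MeasureTheory.integral_Ioc_eq_integral_Ioo, key,
    ← MeasureTheory.integral_const_mul]
  refine MeasureTheory.setIntegral_congr_fun measurableSet_Ioo fun x hx => ?_
  obtain ⟨hx0, hx1⟩ := hx
  have hx4 : (0:ℝ) < 1 - x^4 := by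
    have := pow_lt_one₀ hx0.le hx1 (by norm_num : (4:ℕ) ≠ 0)
    linarith
  have h1 : ((x:ℝ)^4) ^ (-(1/4):ℝ) = x⁻¹ := by
    rw [← Real.rpow_natCast x 4, ← Real.rpow_mul hx0.le]
    norm_num
    exact Real.rpow_neg_one x
  have h2 : (1 - x^4) ^ (-(1/2):ℝ) = (Real.sqrt (1 - x^4))⁻¹ := by
    rw [Real.rpow_neg hx4.le, Real.sqrt_eq_rpow]
  simp only [smul_eq_mul, h1, h2]
  rw [abs_of_pos (by positivity)]
  have hs : Real.sqrt (1 - x^4) ≠ 0 := by positivity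
  field_simp

theorem stmt_3 :
    (∫ x in (0:ℝ)..1, x^2 / Real.sqrt (1 - x^4)) =
      (Real.Gamma (3/4))^2 / Real.sqrt (2 * π) := by
  rw [subst_pow4, beta_real, Real.Gamma_one_half_eq]
  have g14 : 0 < Real.Gamma (1/4) := Real.Gamma_pos_of_pos (by norm_num)
  have g34 : 0 < Real.Gamma (3/4) := Real.Gamma_pos_of_pos (by norm_num)
  have hrefl : Real.Gamma (1/4) * Real.Gamma (3/4) = Real.sqrt 2 * π := by
    have h := Real.Gamma_mul_Gamma_one_sub (1/4)
    rw [show (1:ℝ) - 1/4 = 3/4 by norm_num,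
      show π * (1/4) = π/4 by ring, Real.sin_pi_div_four] at h
    rw [h, div_eq_iff (by positivity)]
    have h2 : Real.sqrt 2 * Real.sqrt 2 = 2 :=
      Real.mul_self_sqrt (by norm_num)
    linear_combination (-π/2) * h2
  have g54 : Real.Gamma (5/4) = (1/4) * Real.Gamma (1/4) := by
    rw [show (5:ℝ)/4 = 1/4 + 1 by norm_num, Real.Gamma_add_one (by norm_num)]
  rw [g54, Real.sqrt_mul (by norm_num) π]
  have hπ : Real.sqrt π * Real.sqrt π = π := Real.mul_self_sqrt Real.pi_pos.le
  have h2 : Real.sqrt 2 * Real.sqrt 2 = 2 := Real.mul_self_sqrt (by norm_num)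
  have hs2 : (0:ℝ) < Real.sqrt 2 := by positivity
  have hsπ : (0:ℝ) < Real.sqrt π := Real.sqrt_pos.mpr Real.pi_pos
  field_simp
  linear_combination Real.sqrt 2 * hπ - hrefl
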